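/- Let n ≥ 1 and G ∈ 𝒢_n, with columns C(0),…,C(2n+1) defined by distance from source. Then every edge of G joins two consecutive columns, and for every k and every vertex v ∈ C(k): if k = 0 then v has 0 neighbors in the previous column and 2 in C(1); if 1 ≤ k ≤ n then v has exactly 1 neighbor in C(k−1) and exactly 2 neighbors in C(k+1); if n+1 ≤ k ≤ 2n then v has exactly 2 neighbors in C(k−1) and exactly 1 neighbor in C(k+1); if k = 2n+1 then v has exactly 2 neighbors in C(2n) and 0 in any later column. In particular, the number of neighbors that a vertex of C(k) has in each adjacent column depends only on k. -/

import Mathlib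

open Finset

noncomputable section

/-- Vertices of a complete binary tree of height `n`: a level `k ≤ n` and an index below `2^k`. -/
abbrev TV (n : ℕ) : Type := Σ k : Fin (n+1), Fin (2^(k : ℕ))

/-- Adjacency in a complete binary tree: one vertex is the parent of the other. -/
def treeAdj (n : ℕ) (a b : TV n) : Prop :=
  ((a.1 : ℕ) + 1 = (b.1 : ℕ) ∧ (b.2 : ℕ) / 2 = (a.2 : ℕ)) ∨
  ((b.1 : ℕ) + 1 = (a.1 : ℕ) ∧ (a.2 : ℕ) / 2 = (b.2 : ℕ))

instance (n : ℕ) (a b : TV n) : Decidable (treeAdj n a b) := by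
  unfold treeAdj; infer_instance

lemma treeAdj_symm (n : ℕ) : Symmetric (treeAdj n) := by
  intro a b h; unfold treeAdj at *; tauto

lemma treeAdj_irrefl (n : ℕ) (a : TV n) : ¬ treeAdj n a a := by
  unfold treeAdj; omega

/-- Vertices of a welded-trees graph: disjoint union of the two trees. -/
abbrev WTV (n : ℕ) : Type := TV n ⊕ TV n

def wtRoot (n : ℕ) : TV n := ⟨⟨0, Nat.succ_pos n⟩, ⟨0, by norm_num⟩⟩

/-- The root of the left tree. -/
def wtSource (n : ℕ) : WTV n := Sum.inl (wtRoot n)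

/-- The root of the right tree. -/
def wtTarget (n : ℕ) : WTV n := Sum.inr (wtRoot n)

instance (n : ℕ) : Inhabited (WTV n) := ⟨wtSource n⟩

/-- The index (among the `2^n` leaves of its tree) of a leaf. -/
def leafIdx {n : ℕ} (a : TV n) : Fin (2^n) := ⟨(a.2 : ℕ) % 2^n, Nat.mod_lt _ (by positivity)⟩

/-- Adjacency in the welded trees graph determined by the welding data `W`
(`W i j = true` iff the `i`-th left leaf is welded to the `j`-th right leaf). -/
def weldedAdj (n : ℕ) (W : Fin (2^n) → Fin (2^n) → Bool) : WTV n → WTV n → Prop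
  | Sum.inl a, Sum.inl b => treeAdj n a b
  | Sum.inr a, Sum.inr b => treeAdj n a b
  | Sum.inl a, Sum.inr b => (a.1 : ℕ) = n ∧ (b.1 : ℕ) = n ∧ W (leafIdx a) (leafIdx b) = true
  | Sum.inr b, Sum.inl a => (a.1 : ℕ) = n ∧ (b.1 : ℕ) = n ∧ W (leafIdx a) (leafIdx b) = true

/-- The welded trees graph determined by the welding data `W`. -/
def weldedGraph (n : ℕ) (W : Fin (2^n) → Fin (2^n) → Bool) : SimpleGraph (WTV n) where
  Adj := weldedAdj n W
  symm := by
    constructor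
    rintro (a|a) (b|b) h
    · exact treeAdj_symm n h
    · exact h
    · exact h
    · exact treeAdj_symm n h
  loopless := by
    constructor
    rintro (a|a) h
    · exact treeAdj_irrefl n a h
    · exact treeAdj_irrefl n a h

instance (n : ℕ) (W : Fin (2^n) → Fin (2^n) → Bool) : DecidableRel (weldedGraph n W).Adj := by
  rintro (a|a) (b|b)
  · exact inferInstanceAs (Decidable (treeAdj n a b))
  · exact inferInstanceAs (Decidable ((a.1 : ℕ) = n ∧ (b.1 : ℕ) = n ∧ W (leafIdx a) (leafIdx b) = true))
  · exact inferInstanceAs (Decidable ((b.1 : ℕ) = n ∧ (a.1 : ℕ) = n ∧ W (leafIdx b) (leafIdx a) = true))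
  · exact inferInstanceAs (Decidable (treeAdj n a b))

/-- The index of the column of a vertex: its distance to `source`. -/
def colIdx (n : ℕ) (W : Fin (2^n) → Fin (2^n) → Bool) (v : WTV n) : ℕ :=
  (weldedGraph n W).dist (wtSource n) v

/-- The `k`-th column: vertices at distance `k` from `source`. -/
def column (n : ℕ) (W : Fin (2^n) → Fin (2^n) → Bool) (k : ℕ) : Set (WTV n) :=
  {v | colIdx n W v = k}

/-- The bipartite graph on the leaves of the two trees given by the welding edges. -/
def weldGraphLeaves (n : ℕ) (W : Fin (2^n) → Fin (2^n) → Bool) :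
    SimpleGraph (Fin (2^n) ⊕ Fin (2^n)) where
  Adj x y := (∃ i j, x = Sum.inl i ∧ y = Sum.inr j ∧ W i j = true) ∨
             (∃ i j, x = Sum.inr j ∧ y = Sum.inl i ∧ W i j = true)
  symm := by
    constructor
    rintro x y (⟨i, j, hx, hy, h⟩ | ⟨i, j, hx, hy, h⟩)
    · exact Or.inr ⟨i, j, hy, hx, h⟩
    · exact Or.inl ⟨i, j, hy, hx, h⟩
  loopless := by
    constructor
    rintro x (⟨i, j, hx, hy, h⟩ | ⟨i, j, hx, hy, h⟩) <;> subst hx <;> simp_all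

/-- `W` is a valid welding datum: every leaf is welded to exactly two leaves of the other
tree, and the welding edges form a single cycle (equivalently, the 2-regular bipartite
welding graph on the `2^{n+1}` leaves is connected). -/
def IsWeldedData (n : ℕ) (W : Fin (2^n) → Fin (2^n) → Bool) : Prop :=
  (∀ i : Fin (2^n), (univ.filter (fun j => W i j = true)).card = 2) ∧
  (∀ j : Fin (2^n), (univ.filter (fun i => W i j = true)).card = 2) ∧
  (weldGraphLeaves n W).Connected

end


/-! ### Auxiliary machinery -/

section AuxLvl

lemma TV.ext' {n : ℕ} {a b : TV n} (h1 : (a.1 : ℕ) = (b.1 : ℕ)) (h2 : (a.2 : ℕ) = (b.2 : ℕ)) :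
    a = b := by
  obtain ⟨⟨k1, hk1⟩, ⟨i1, hi1⟩⟩ := a
  obtain ⟨⟨k2, hk2⟩, ⟨i2, hi2⟩⟩ := b
  dsimp at h1 h2
  subst h1; subst h2
  rfl

/-- The level of a vertex: tree level on the left, reflected on the right. -/
def lvl (n : ℕ) : WTV n → ℕ
  | Sum.inl a => a.1
  | Sum.inr a => 2*n+1 - a.1

variable {n : ℕ} {W : Fin (2^n) → Fin (2^n) → Bool}

lemma lvl_le (v : WTV n) : lvl n v ≤ 2*n+1 := by
  cases v with
  | inl a => have := a.1.isLt; show (a.1:ℕ) ≤ 2*n+1; omega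
  | inr a => show 2*n+1 - (a.1:ℕ) ≤ 2*n+1; omega

lemma lvl_inr_ge (a : TV n) : n+1 ≤ lvl n (Sum.inr a) := by
  have := a.1.isLt; show n+1 ≤ 2*n+1 - (a.1:ℕ); omega

lemma lvl_source : lvl n (wtSource n) = 0 := rfl

lemma adj_lvl {u v : WTV n} (h : (weldedGraph n W).Adj u v) :
    lvl n v = lvl n u + 1 ∨ lvl n u = lvl n v + 1 := by
  cases u with
  | inl a =>
    cases v with
    | inl b =>
      have ha := a.1.isLt; have hb := b.1.isLt
      show (b.1:ℕ) = (a.1:ℕ) + 1 ∨ (a.1:ℕ) = (b.1:ℕ) + 1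
      rcases h with ⟨h1, _⟩ | ⟨h1, _⟩ <;> omega
    | inr b =>
      obtain ⟨h1, h2, _⟩ := h
      have hb := b.1.isLt
      show 2*n+1 - (b.1:ℕ) = (a.1:ℕ) + 1 ∨ (a.1:ℕ) = (2*n+1 - (b.1:ℕ)) + 1
      omega
  | inr a =>
    cases v with
    | inl b =>
      obtain ⟨h1, h2, _⟩ := h
      have hb := b.1.isLt
      show (b.1:ℕ) = (2*n+1 - (a.1:ℕ)) + 1 ∨ 2*n+1 - (a.1:ℕ) = (b.1:ℕ) + 1
      omega
    | inr b =>
      have ha := a.1.isLt; have hb := b.1.isLt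
      show 2*n+1 - (b.1:ℕ) = (2*n+1 - (a.1:ℕ)) + 1 ∨
        2*n+1 - (a.1:ℕ) = (2*n+1 - (b.1:ℕ)) + 1
      rcases h with ⟨h1, _⟩ | ⟨h1, _⟩ <;> omega

lemma walk_lvl {u v : WTV n} (p : (weldedGraph n W).Walk u v) :
    lvl n v ≤ lvl n u + p.length := by
  induction p with
  | nil => simp
  | cons h p ih =>
    rcases adj_lvl h with h' | h' <;> simp only [SimpleGraph.Walk.length_cons] <;> omega

lemma exists_walk_inl (k : ℕ) (hk : k < n + 1) (i : Fin (2^k)) :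
    ∃ p : (weldedGraph n W).Walk (wtSource n) (Sum.inl ⟨⟨k, hk⟩, i⟩), p.length = k := by
  induction k with
  | zero =>
    have heq : wtSource n = (Sum.inl ⟨⟨0, hk⟩, i⟩ : WTV n) := by
      have h0 : (0 : ℕ) = (i : ℕ) := by omega
      simp only [wtSource, wtRoot]
      congr 1
      exact TV.ext' rfl h0
    exact ⟨SimpleGraph.Walk.nil.copy rfl heq, by rw [SimpleGraph.Walk.length_copy]; rfl⟩
  | succ k ih =>
    have hk' : k < n + 1 := by omega
    have hlt : (i : ℕ) < 2^(k+1) := i.isLt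
    have hi : (i : ℕ) / 2 < 2^k := by omega
    obtain ⟨p, hp⟩ := ih hk' ⟨(i : ℕ)/2, hi⟩
    have hadj : (weldedGraph n W).Adj (Sum.inl ⟨⟨k, hk'⟩, ⟨(i:ℕ)/2, hi⟩⟩)
        (Sum.inl ⟨⟨k+1, hk⟩, i⟩) := by
      left; exact ⟨rfl, rfl⟩
    exact ⟨p.concat hadj, by simp [SimpleGraph.Walk.length_concat, hp]⟩

lemma exists_walk_to_leaf (k : ℕ) (hk : k < n + 1) (i : Fin (2^k)) :
    ∃ (l : Fin (2^n)) (p : (weldedGraph n W).Walk (Sum.inr ⟨⟨k, hk⟩, i⟩)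
      (Sum.inr ⟨⟨n, lt_add_one n⟩, l⟩)), p.length = n - k := by
  suffices H : ∀ d k (hk : k < n + 1) (i : Fin (2^k)), n - k = d →
      ∃ (l : Fin (2^n)) (p : (weldedGraph n W).Walk (Sum.inr ⟨⟨k, hk⟩, i⟩)
        (Sum.inr ⟨⟨n, lt_add_one n⟩, l⟩)), p.length = n - k by
    exact H (n - k) k hk i rfl
  intro d
  induction d with
  | zero =>
    intro k hk i hd
    have hkn : k = n := by omega
    subst hkn
    refine ⟨i, SimpleGraph.Walk.nil.copy rfl (by congr 1), by simp⟩
  | succ d ih =>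
    intro k hk i hd
    have hk' : k + 1 < n + 1 := by omega
    have hlt : (i : ℕ) < 2^k := i.isLt
    have hpow : (2:ℕ)^(k+1) = 2 * 2^k := by ring
    have hi : 2 * (i : ℕ) < 2^(k+1) := by omega
    have hadj : (weldedGraph n W).Adj (Sum.inr ⟨⟨k, hk⟩, i⟩)
        (Sum.inr ⟨⟨k+1, hk'⟩, ⟨2*(i:ℕ), hi⟩⟩) := by
      left
      exact ⟨rfl, show (2*(i:ℕ))/2 = (i:ℕ) by omega⟩
    obtain ⟨l, p, hp⟩ := ih (k+1) hk' ⟨2*(i:ℕ), hi⟩ (by omega)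
    refine ⟨l, SimpleGraph.Walk.cons hadj p, ?_⟩
    simp only [SimpleGraph.Walk.length_cons, hp]
    omega

lemma leafIdx_mk (h : n < n + 1) (j : Fin (2^n)) :
    leafIdx (⟨⟨n, h⟩, j⟩ : TV n) = j := by
  apply Fin.ext
  show (j : ℕ) % 2^n = (j : ℕ)
  exact Nat.mod_eq_of_lt j.isLt

lemma weld_adj_of (h : n < n + 1) {i j : Fin (2^n)} (hij : W i j = true) :
    (weldedGraph n W).Adj (Sum.inl ⟨⟨n, h⟩, i⟩) (Sum.inr ⟨⟨n, h⟩, j⟩) := by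
  refine ⟨rfl, rfl, ?_⟩
  rwa [leafIdx_mk, leafIdx_mk]

lemma colIdx_eq_lvl (hW : IsWeldedData n W) (v : WTV n) : colIdx n W v = lvl n v := by
  have hub : ∃ p : (weldedGraph n W).Walk (wtSource n) v, p.length = lvl n v := by
    cases v with
    | inl a =>
      obtain ⟨⟨k, hk⟩, i⟩ := a
      obtain ⟨p, hp⟩ := exists_walk_inl (W := W) k hk i
      exact ⟨p, hp⟩
    | inr a =>
      obtain ⟨⟨k, hk⟩, i⟩ := a
      obtain ⟨l, q, hq⟩ := exists_walk_to_leaf (W := W) k hk i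
      have h2 : (univ.filter (fun i => W i l = true)).card = 2 := hW.2.1 l
      have hne : (univ.filter (fun i => W i l = true)).Nonempty := by
        rw [← Finset.card_pos, h2]; norm_num
      obtain ⟨i0, hi0⟩ := hne
      rw [Finset.mem_filter] at hi0
      have hadj := weld_adj_of (W := W) (lt_add_one n) hi0.2
      obtain ⟨p, hp⟩ := exists_walk_inl (W := W) n (lt_add_one n) i0
      refine ⟨(p.concat hadj).append q.reverse, ?_⟩
      rw [SimpleGraph.Walk.length_append, SimpleGraph.Walk.length_concat,
        SimpleGraph.Walk.length_reverse, hp, hq]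
      show n + 1 + (n - k) = 2*n+1 - k
      omega
  obtain ⟨p, hp⟩ := hub
  have hle : colIdx n W v ≤ lvl n v := hp ▸ SimpleGraph.dist_le p
  have hreach : (weldedGraph n W).Reachable (wtSource n) v := ⟨p⟩
  obtain ⟨q, hq⟩ := hreach.exists_walk_length_eq_dist
  have hge : lvl n v ≤ colIdx n W v := by
    have hwl := walk_lvl q
    rw [hq] at hwl
    simpa [lvl_source, colIdx] using hwl
  omega

lemma mem_column_iff (hW : IsWeldedData n W) (v : WTV n) (k : ℕ) :
    v ∈ column n W k ↔ lvl n v = k := by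
  rw [column, Set.mem_setOf_eq, colIdx_eq_lvl hW]

lemma nbr_inter (hW : IsWeldedData n W) (v : WTV n) (k : ℕ) :
    (weldedGraph n W).neighborSet v ∩ column n W k
      = {u | (weldedGraph n W).Adj v u ∧ lvl n u = k} := by
  ext u
  rw [Set.mem_inter_iff, SimpleGraph.mem_neighborSet, mem_column_iff hW]
  rfl

/-- Intersection with a non-adjacent column is empty. -/
lemma inter_empty (hW : IsWeldedData n W) (v : WTV n) (k : ℕ)
    (h : (k ≠ lvl n v + 1 ∧ lvl n v ≠ k + 1) ∨ 2*n+1 < k) :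
    (weldedGraph n W).neighborSet v ∩ column n W k = ∅ := by
  rw [nbr_inter hW]
  ext u
  simp only [Set.mem_setOf_eq, Set.mem_empty_iff_false, iff_false, not_and]
  intro hadj hlvl
  have h1 := adj_lvl hadj
  have h2 := lvl_le u
  omega

/-- The neighbors of a non-root left vertex in the previous column: just the parent. -/
lemma inl_parent (hW : IsWeldedData n W) (a : TV n) (ha : 1 ≤ (a.1 : ℕ)) :
    (weldedGraph n W).neighborSet (Sum.inl a) ∩ column n W ((a.1 : ℕ) - 1)
      = {Sum.inl ⟨⟨(a.1:ℕ) - 1, by omega⟩, ⟨(a.2:ℕ)/2, by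
          have h2 : (a.2:ℕ) < 2^(a.1:ℕ) := a.2.isLt
          have hpow : (2:ℕ)^((a.1:ℕ)-1+1) = 2 * 2^((a.1:ℕ)-1) := by ring
          show (a.2:ℕ)/2 < 2^((a.1:ℕ)-1)
          have : (a.1:ℕ) - 1 + 1 = (a.1:ℕ) := by omega
          rw [this] at hpow
          omega⟩⟩} := by
  rw [nbr_inter hW]
  ext u
  simp only [Set.mem_setOf_eq, Set.mem_singleton_iff]
  constructor
  · rintro ⟨hadj, hlvl⟩
    cases u with
    | inl b =>
      have hb1 : (b.1:ℕ) = (a.1:ℕ) - 1 := hlvl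
      rcases hadj with ⟨h1, h2⟩ | ⟨h1, h2⟩
      · omega
      · congr 1
        exact TV.ext' hb1 h2.symm
    | inr b =>
      exfalso
      have h3 := lvl_inr_ge b
      have h4 := a.1.isLt
      have h5 : lvl n (Sum.inr b) = (a.1:ℕ) - 1 := hlvl
      omega
  · rintro rfl
    refine ⟨Or.inr ⟨show ((a.1:ℕ)-1) + 1 = (a.1:ℕ) by omega, rfl⟩, rfl⟩

/-- The neighbors of an internal left vertex in the next column: its two children. -/
lemma inl_children (hW : IsWeldedData n W) (a : TV n) (ha : (a.1 : ℕ) < n) :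
    (weldedGraph n W).neighborSet (Sum.inl a) ∩ column n W ((a.1 : ℕ) + 1)
      = {Sum.inl ⟨⟨(a.1:ℕ) + 1, by omega⟩, ⟨2*(a.2:ℕ), by
            have h2 : (a.2:ℕ) < 2^(a.1:ℕ) := a.2.isLt
            have hpow : (2:ℕ)^((a.1:ℕ)+1) = 2 * 2^(a.1:ℕ) := by ring
            show 2*(a.2:ℕ) < 2^((a.1:ℕ)+1)
            omega⟩⟩,
         Sum.inl ⟨⟨(a.1:ℕ) + 1, by omega⟩, ⟨2*(a.2:ℕ)+1, by
            have h2 : (a.2:ℕ) < 2^(a.1:ℕ) := a.2.isLt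
            have hpow : (2:ℕ)^((a.1:ℕ)+1) = 2 * 2^(a.1:ℕ) := by ring
            show 2*(a.2:ℕ)+1 < 2^((a.1:ℕ)+1)
            omega⟩⟩} := by
  rw [nbr_inter hW]
  ext u
  simp only [Set.mem_setOf_eq, Set.mem_insert_iff, Set.mem_singleton_iff]
  constructor
  · rintro ⟨hadj, hlvl⟩
    cases u with
    | inl b =>
      have hb1 : (b.1:ℕ) = (a.1:ℕ) + 1 := hlvl
      rcases hadj with ⟨h1, h2⟩ | ⟨h1, h2⟩
      · rcases Nat.lt_or_ge (b.2 : ℕ) (2*(a.2:ℕ)+1) with h | h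
        · left; congr 1; exact TV.ext' hb1 (show (b.2:ℕ) = 2*(a.2:ℕ) by omega)
        · right; congr 1; exact TV.ext' hb1 (show (b.2:ℕ) = 2*(a.2:ℕ)+1 by omega)
      · omega
    | inr b =>
      exfalso
      have h3 := lvl_inr_ge b
      have h4 : lvl n (Sum.inr b) = (a.1:ℕ) + 1 := hlvl
      omega
  · rintro (rfl | rfl)
    · exact ⟨Or.inl ⟨rfl, show (2*(a.2:ℕ))/2 = (a.2:ℕ) by omega⟩, rfl⟩
    · exact ⟨Or.inl ⟨rfl, show (2*(a.2:ℕ)+1)/2 = (a.2:ℕ) by omega⟩, rfl⟩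

/-- The neighbors of a non-root right vertex in the next column: just the parent. -/
lemma inr_parent (hW : IsWeldedData n W) (a : TV n) (ha : 1 ≤ (a.1 : ℕ)) :
    (weldedGraph n W).neighborSet (Sum.inr a) ∩ column n W (2*n+1 - ((a.1:ℕ) - 1))
      = {Sum.inr ⟨⟨(a.1:ℕ) - 1, by omega⟩, ⟨(a.2:ℕ)/2, by
          have h2 : (a.2:ℕ) < 2^(a.1:ℕ) := a.2.isLt
          have hpow : (2:ℕ)^((a.1:ℕ)-1+1) = 2 * 2^((a.1:ℕ)-1) := by ring
          show (a.2:ℕ)/2 < 2^((a.1:ℕ)-1)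
          have : (a.1:ℕ) - 1 + 1 = (a.1:ℕ) := by omega
          rw [this] at hpow
          omega⟩⟩} := by
  rw [nbr_inter hW]
  ext u
  simp only [Set.mem_setOf_eq, Set.mem_singleton_iff]
  constructor
  · rintro ⟨hadj, hlvl⟩
    cases u with
    | inl b =>
      exfalso
      obtain ⟨h1, h2, _⟩ := hadj
      have hb : (b.1:ℕ) = 2*n+1 - ((a.1:ℕ) - 1) := hlvl
      have h4 := a.1.isLt
      omega
    | inr b =>
      have hb1 : 2*n+1 - (b.1:ℕ) = 2*n+1 - ((a.1:ℕ)-1) := hlvl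
      have hbb := b.1.isLt
      have haa := a.1.isLt
      have hb1' : (b.1:ℕ) = (a.1:ℕ) - 1 := by omega
      rcases hadj with ⟨h1, h2⟩ | ⟨h1, h2⟩
      · omega
      · congr 1
        exact TV.ext' hb1' h2.symm
  · rintro rfl
    refine ⟨Or.inr ⟨show ((a.1:ℕ)-1) + 1 = (a.1:ℕ) by omega, rfl⟩, rfl⟩

/-- The neighbors of an internal right vertex in the previous column: its two children. -/
lemma inr_children (hW : IsWeldedData n W) (a : TV n) (ha : (a.1 : ℕ) < n) :
    (weldedGraph n W).neighborSet (Sum.inr a) ∩ column n W (2*n - (a.1:ℕ))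
      = {Sum.inr ⟨⟨(a.1:ℕ) + 1, by omega⟩, ⟨2*(a.2:ℕ), by
            have h2 : (a.2:ℕ) < 2^(a.1:ℕ) := a.2.isLt
            have hpow : (2:ℕ)^((a.1:ℕ)+1) = 2 * 2^(a.1:ℕ) := by ring
            show 2*(a.2:ℕ) < 2^((a.1:ℕ)+1)
            omega⟩⟩,
         Sum.inr ⟨⟨(a.1:ℕ) + 1, by omega⟩, ⟨2*(a.2:ℕ)+1, by
            have h2 : (a.2:ℕ) < 2^(a.1:ℕ) := a.2.isLt
            have hpow : (2:ℕ)^((a.1:ℕ)+1) = 2 * 2^(a.1:ℕ) := by ring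
            show 2*(a.2:ℕ)+1 < 2^((a.1:ℕ)+1)
            omega⟩⟩} := by
  rw [nbr_inter hW]
  ext u
  simp only [Set.mem_setOf_eq, Set.mem_insert_iff, Set.mem_singleton_iff]
  constructor
  · rintro ⟨hadj, hlvl⟩
    cases u with
    | inl b =>
      exfalso
      obtain ⟨h1, h2, _⟩ := hadj
      have hb : (b.1:ℕ) = 2*n - (a.1:ℕ) := hlvl
      omega
    | inr b =>
      have hb1 : 2*n+1 - (b.1:ℕ) = 2*n - (a.1:ℕ) := hlvl
      have hbb := b.1.isLt
      have hb1' : (b.1:ℕ) = (a.1:ℕ) + 1 := by omega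
      rcases hadj with ⟨h1, h2⟩ | ⟨h1, h2⟩
      · rcases Nat.lt_or_ge (b.2 : ℕ) (2*(a.2:ℕ)+1) with h | h
        · left; congr 1; exact TV.ext' hb1' (show (b.2:ℕ) = 2*(a.2:ℕ) by omega)
        · right; congr 1; exact TV.ext' hb1' (show (b.2:ℕ) = 2*(a.2:ℕ)+1 by omega)
      · omega
  · rintro (rfl | rfl)
    · exact ⟨Or.inl ⟨rfl, show (2*(a.2:ℕ))/2 = (a.2:ℕ) by omega⟩,
        show 2*n+1 - ((a.1:ℕ)+1) = 2*n - (a.1:ℕ) by omega⟩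
    · exact ⟨Or.inl ⟨rfl, show (2*(a.2:ℕ)+1)/2 = (a.2:ℕ) by omega⟩,
        show 2*n+1 - ((a.1:ℕ)+1) = 2*n - (a.1:ℕ) by omega⟩

/-- The welded neighbors (in column `n+1`) of a left leaf. -/
lemma inl_weld (hW : IsWeldedData n W) (a : TV n) (ha : (a.1 : ℕ) = n) :
    ((weldedGraph n W).neighborSet (Sum.inl a) ∩ column n W (n+1)).ncard = 2 := by
  have key : (weldedGraph n W).neighborSet (Sum.inl a) ∩ column n W (n+1)
      = (fun j : Fin (2^n) => (Sum.inr ⟨⟨n, lt_add_one n⟩, j⟩ : WTV n)) ''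
        {j | W (leafIdx a) j = true} := by
    rw [nbr_inter hW]
    ext u
    simp only [Set.mem_setOf_eq, Set.mem_image]
    constructor
    · rintro ⟨hadj, hlvl⟩
      cases u with
      | inl b =>
        exfalso
        have hb : (b.1:ℕ) = n + 1 := hlvl
        have hbb := b.1.isLt
        omega
      | inr b =>
        obtain ⟨_, hb1, hw⟩ := hadj
        refine ⟨leafIdx b, hw, ?_⟩
        congr 1
        refine TV.ext' ?_ ?_
        · exact (show ((⟨⟨n, lt_add_one n⟩, leafIdx b⟩ : TV n).1 : ℕ) = n from rfl).trans hb1.symm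
        · show (b.2 : ℕ) % 2^n = (b.2 : ℕ)
          have hlt : (b.2 : ℕ) < 2^n := lt_of_lt_of_eq b.2.isLt (by rw [hb1])
          exact Nat.mod_eq_of_lt hlt
    · rintro ⟨j, hj, rfl⟩
      refine ⟨⟨ha, rfl, ?_⟩, ?_⟩
      · rwa [leafIdx_mk]
      · show 2*n+1 - n = n + 1
        omega
  rw [key, Set.ncard_image_of_injective _ (fun x y hxy => by
    have : (x : ℕ) = (y : ℕ) := congrArg (fun u => match u with
      | Sum.inr c => (c.2 : ℕ) | Sum.inl _ => 0) hxy
    exact Fin.ext this)]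
  rw [Set.ncard_eq_toFinset_card', Set.toFinset_setOf]
  exact hW.1 (leafIdx a)

/-- The welded neighbors (in column `n`) of a right leaf. -/
lemma inr_weld (hW : IsWeldedData n W) (a : TV n) (ha : (a.1 : ℕ) = n) :
    ((weldedGraph n W).neighborSet (Sum.inr a) ∩ column n W n).ncard = 2 := by
  have key : (weldedGraph n W).neighborSet (Sum.inr a) ∩ column n W n
      = (fun i : Fin (2^n) => (Sum.inl ⟨⟨n, lt_add_one n⟩, i⟩ : WTV n)) ''
        {i | W i (leafIdx a) = true} := by
    rw [nbr_inter hW]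
    ext u
    simp only [Set.mem_setOf_eq, Set.mem_image]
    constructor
    · rintro ⟨hadj, hlvl⟩
      cases u with
      | inl b =>
        obtain ⟨hb1, _, hw⟩ := hadj
        refine ⟨leafIdx b, hw, ?_⟩
        congr 1
        refine TV.ext' ?_ ?_
        · exact (show ((⟨⟨n, lt_add_one n⟩, leafIdx b⟩ : TV n).1 : ℕ) = n from rfl).trans hb1.symm
        · show (b.2 : ℕ) % 2^n = (b.2 : ℕ)
          have hlt : (b.2 : ℕ) < 2^n := lt_of_lt_of_eq b.2.isLt (by rw [hb1])
          exact Nat.mod_eq_of_lt hlt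
      | inr b =>
        exfalso
        have h3 := lvl_inr_ge b
        have hb : lvl n (Sum.inr b) = n := hlvl
        omega
    · rintro ⟨i, hi, rfl⟩
      exact ⟨⟨rfl, ha, by rwa [leafIdx_mk]⟩, rfl⟩
  rw [key, Set.ncard_image_of_injective _ (fun x y hxy => by
    have : (x : ℕ) = (y : ℕ) := congrArg (fun u => match u with
      | Sum.inl c => (c.2 : ℕ) | Sum.inr _ => 0) hxy
    exact Fin.ext this)]
  rw [Set.ncard_eq_toFinset_card', Set.toFinset_setOf]
  exact hW.2.1 (leafIdx a)

lemma inl_ne_inl_of_snd {n : ℕ} {a b : TV n} (h : (a.2 : ℕ) ≠ (b.2 : ℕ)) :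
    (Sum.inl a : WTV n) ≠ Sum.inl b := by
  intro hab
  apply h
  have : a = b := Sum.inl.injEq a b ▸ hab |> (by simpa using ·)
  rw [this]

lemma inr_ne_inr_of_snd {n : ℕ} {a b : TV n} (h : (a.2 : ℕ) ≠ (b.2 : ℕ)) :
    (Sum.inr a : WTV n) ≠ Sum.inr b := by
  intro hab
  apply h
  have : a = b := by simpa using hab
  rw [this]

end AuxLvl


section NcardCors

variable {n : ℕ} {W : Fin (2^n) → Fin (2^n) → Bool}

lemma inl_parent_ncard (hW : IsWeldedData n W) (a : TV n) (ha : 1 ≤ (a.1 : ℕ)) :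
    ((weldedGraph n W).neighborSet (Sum.inl a) ∩ column n W ((a.1 : ℕ) - 1)).ncard = 1 := by
  rw [inl_parent hW a ha]; exact Set.ncard_singleton _

lemma inr_parent_ncard (hW : IsWeldedData n W) (a : TV n) (ha : 1 ≤ (a.1 : ℕ)) :
    ((weldedGraph n W).neighborSet (Sum.inr a) ∩ column n W (2*n+1 - ((a.1:ℕ) - 1))).ncard
      = 1 := by
  rw [inr_parent hW a ha]; exact Set.ncard_singleton _

lemma inl_children_ncard (hW : IsWeldedData n W) (a : TV n) (ha : (a.1 : ℕ) < n) :
    ((weldedGraph n W).neighborSet (Sum.inl a) ∩ column n W ((a.1 : ℕ) + 1)).ncard = 2 := by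
  rw [inl_children hW a ha]
  exact Set.ncard_pair (inl_ne_inl_of_snd (show 2*(a.2:ℕ) ≠ 2*(a.2:ℕ)+1 by omega))

lemma inr_children_ncard (hW : IsWeldedData n W) (a : TV n) (ha : (a.1 : ℕ) < n) :
    ((weldedGraph n W).neighborSet (Sum.inr a) ∩ column n W (2*n - (a.1:ℕ))).ncard = 2 := by
  rw [inr_children hW a ha]
  exact Set.ncard_pair (inr_ne_inr_of_snd (show 2*(a.2:ℕ) ≠ 2*(a.2:ℕ)+1 by omega))

end NcardCors

/-- In a welded-trees graph, every edge joins two consecutive columns,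
and the number of neighbors that a vertex of `C(k)` has in each adjacent column depends
only on `k`: a vertex of `C(0) = {source}` has `0` neighbors in the previous column and
`2` in `C(1)`; a vertex of `C(k)` with `1 ≤ k ≤ n` has exactly `1` neighbor in `C(k-1)`
and `2` in `C(k+1)`; a vertex of `C(k)` with `n+1 ≤ k ≤ 2n` has exactly `2` neighbors in
`C(k-1)` and `1` in `C(k+1)`; and a vertex of `C(2n+1) = {target}` has exactly `2`
neighbors in `C(2n)` and `0` in any later column. -/
theorem welded_trees_edges_between_columns (n : ℕ) (hn : 1 ≤ n)
    (W : Fin (2^n) → Fin (2^n) → Bool) (hW : IsWeldedData n W) :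
    (∀ u v : WTV n, (weldedGraph n W).Adj u v →
      colIdx n W v = colIdx n W u + 1 ∨ colIdx n W u = colIdx n W v + 1) ∧
    (∀ (k : ℕ) (v : WTV n), v ∈ column n W k →
      (k = 0 →
        ((weldedGraph n W).neighborSet v ∩ column n W 0).ncard = 0 ∧
        ((weldedGraph n W).neighborSet v ∩ column n W 1).ncard = 2) ∧
      (1 ≤ k → k ≤ n →
        ((weldedGraph n W).neighborSet v ∩ column n W (k-1)).ncard = 1 ∧
        ((weldedGraph n W).neighborSet v ∩ column n W (k+1)).ncard = 2) ∧
      (n+1 ≤ k → k ≤ 2*n →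
        ((weldedGraph n W).neighborSet v ∩ column n W (k-1)).ncard = 2 ∧
        ((weldedGraph n W).neighborSet v ∩ column n W (k+1)).ncard = 1) ∧
      (k = 2*n+1 →
        ((weldedGraph n W).neighborSet v ∩ column n W (2*n)).ncard = 2 ∧
        (∀ j : ℕ, 2*n+1 < j → (weldedGraph n W).neighborSet v ∩ column n W j = ∅))) := by
  have hL := colIdx_eq_lvl hW
  constructor
  · intro u v h
    rw [hL, hL]
    exact adj_lvl h
  · intro k v hv
    rw [mem_column_iff hW] at hv
    refine ⟨?_, ?_, ?_, ?_⟩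
    · rintro rfl
      constructor
      · rw [inter_empty hW v 0 (Or.inl ⟨by omega, by omega⟩)]
        exact Set.ncard_empty _
      · cases v with
        | inl a =>
          have ha : (a.1 : ℕ) = 0 := hv
          rw [show (1:ℕ) = (a.1:ℕ) + 1 by omega]
          exact inl_children_ncard hW a (by omega)
        | inr a =>
          exfalso
          have := lvl_inr_ge a
          omega
    · intro h1 h2
      cases v with
      | inl a =>
        have ha : (a.1 : ℕ) = k := hv
        constructor
        · rw [show k - 1 = (a.1:ℕ) - 1 by omega]
          exact inl_parent_ncard hW a (by omega)
        · rcases Nat.lt_or_ge k n with hk | hk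
          · rw [show k + 1 = (a.1:ℕ) + 1 by omega]
            exact inl_children_ncard hW a (by omega)
          · have hkn : k = n := by omega
            subst hkn
            exact inl_weld hW a (by omega)
      | inr a =>
        exfalso
        have := lvl_inr_ge a
        omega
    · intro h1 h2
      cases v with
      | inl a =>
        exfalso
        have ha : (a.1 : ℕ) = k := hv
        have := a.1.isLt
        omega
      | inr a =>
        have ha : 2*n+1 - (a.1 : ℕ) = k := hv
        have halt := a.1.isLt
        constructor
        · rcases Nat.lt_or_ge (n+1) k with hk | hk
          · rw [show k - 1 = 2*n - (a.1:ℕ) by omega]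
            exact inr_children_ncard hW a (by omega)
          · have hkn : k = n + 1 := by omega
            subst hkn
            rw [show n + 1 - 1 = n by omega]
            exact inr_weld hW a (by omega)
        · rw [show k + 1 = 2*n+1 - ((a.1:ℕ) - 1) by omega]
          exact inr_parent_ncard hW a (by omega)
    · rintro rfl
      cases v with
      | inl a =>
        exfalso
        have ha : (a.1 : ℕ) = 2*n+1 := hv
        have := a.1.isLt
        omega
      | inr a =>
        have ha : 2*n+1 - (a.1 : ℕ) = 2*n+1 := hv
        have halt := a.1.isLt
        constructor
        · rw [show 2*n = 2*n - (a.1:ℕ) by omega]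
          exact inr_children_ncard hW a (by omega)
        · intro j hj
          exact inter_empty hW _ j (Or.inr hj)
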